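/- Let f = x⁴ + y⁴ + z⁴ ∈ ℝ[x,y,z] (the Fermat quartic, which defines a smooth complex plane quartic). A real line L ⊂ ℙ²(ℂ) is a bitangent of V(f) if and only if L = V(x + εy + δz) for some ε, δ ∈ {+1, −1}. In particular, V(f) has exactly four real bitangent lines, and each of them is non-split (for instance the restriction of f to V(x − y − z) equals 2(y² + yz + z²)², whose zeros form a complex-conjugate pair). -/

import Mathlib

open MvPolynomial

noncomputable section

/-- Complexification of a real ternary polynomial. -/
def cmap (f : MvPolynomial (Fin 3) ℝ) : MvPolynomial (Fin 3) ℂ :=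
  MvPolynomial.map (algebraMap ℝ ℂ) f

/-- Evaluation of the complexification of `f` at a complex point. -/
def cev (f : MvPolynomial (Fin 3) ℝ) (p : Fin 3 → ℂ) : ℂ :=
  eval p (cmap f)

/-- The linear form with coefficient vector `ℓ`, evaluated at `p`. -/
def lin {R : Type*} [CommSemiring R] (ℓ p : Fin 3 → R) : R := ∑ i, ℓ i * p i

/-- The complexification of a real vector. -/
def cvec (v : Fin 3 → ℝ) : Fin 3 → ℂ := fun i => (v i : ℂ)

/-- Smoothness of the complex plane curve V(f): the gradient is nonzero at every
nonzero complex zero of `f`. -/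
def SmoothQuartic (f : MvPolynomial (Fin 3) ℝ) : Prop :=
  ∀ p : Fin 3 → ℂ, p ≠ 0 → cev f p = 0 → ∃ i, eval p (pderiv i (cmap f)) ≠ 0

/-- The line `V(ℓ)` is a bitangent of `V(f)` with tangency points `z₁, z₂`:
the restriction of `f` to the line is a nonzero scalar multiple of the square of a
nonzero quadratic form on the line, whose zeros (with multiplicity) are `z₁, z₂`.
Over ℂ the quadratic form is written as the product of two linear forms `m₁, m₂`,
each nonzero on the line and vanishing at the corresponding tangency point. -/
def IsBitangentAt (f : MvPolynomial (Fin 3) ℝ) (ℓ z₁ z₂ : Fin 3 → ℂ) : Prop :=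
  ℓ ≠ 0 ∧ z₁ ≠ 0 ∧ z₂ ≠ 0 ∧ lin ℓ z₁ = 0 ∧ lin ℓ z₂ = 0 ∧
  ∃ (m₁ m₂ : Fin 3 → ℂ) (c : ℂ), c ≠ 0 ∧
    lin m₁ z₁ = 0 ∧ lin m₂ z₂ = 0 ∧
    (∃ p, lin ℓ p = 0 ∧ lin m₁ p ≠ 0) ∧
    (∃ p, lin ℓ p = 0 ∧ lin m₂ p ≠ 0) ∧
    (∀ p, lin ℓ p = 0 → cev f p = c * (lin m₁ p * lin m₂ p) ^ 2)

/-- The line `V(ℓ)` is a bitangent of the quartic `V(f)`. -/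
def IsBitangent (f : MvPolynomial (Fin 3) ℝ) (ℓ : Fin 3 → ℂ) : Prop :=
  ∃ z₁ z₂, IsBitangentAt f ℓ z₁ z₂

/-- The set of real bitangent lines of `V(f)`, as points of the real projective
plane of lines. -/
def realBitangents (f : MvPolynomial (Fin 3) ℝ) :
    Set (Projectivization ℝ (Fin 3 → ℝ)) :=
  {L | IsBitangent f (cvec L.rep)}

/-- Directional derivative of (the complexification of) `f` along the real vector `v`. -/
def Dv (f : MvPolynomial (Fin 3) ℝ) (v : Fin 3 → ℝ) (z : Fin 3 → ℂ) : ℂ :=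
  ∑ i, (v i : ℂ) * eval z (pderiv i (cmap f))

/-- `Qtype_{L∞}(L) = ε ∈ {+1, -1}` for the real bitangent `L = V(ℓ)` of `V(f)`,
relative to the real line at infinity `V(ℓinf)`: for tangency points normalized so
that `ℓ∞(z̃ᵢ) = 1` and any real `v` with `ℓ(v) ≠ 0`, the product
`(D_v f)(z̃₁)·(D_v f)(z̃₂)` is a nonzero real number of sign `ε`. -/
def HasQtype (f : MvPolynomial (Fin 3) ℝ) (ℓinf : Fin 3 → ℝ) (ℓ : Fin 3 → ℂ)
    (ε : ℤ) : Prop :=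
  ∃ (z₁ z₂ : Fin 3 → ℂ) (v : Fin 3 → ℝ) (r : ℝ),
    IsBitangentAt f ℓ z₁ z₂ ∧
    lin (cvec ℓinf) z₁ = 1 ∧ lin (cvec ℓinf) z₂ = 1 ∧
    lin ℓ (cvec v) ≠ 0 ∧
    Dv f v z₁ * Dv f v z₂ = (r : ℂ) ∧
    ((0 < r ∧ ε = 1) ∨ (r < 0 ∧ ε = -1))

/-- A point of ℙ²(ℂ) (given by a nonzero vector) is real. -/
def IsRealPoint (z : Fin 3 → ℂ) : Prop :=
  ∃ (w : Fin 3 → ℝ) (t : ℂ), w ≠ 0 ∧ t ≠ 0 ∧ z = t • cvec w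


/-- The Fermat quartic `x⁴ + y⁴ + z⁴`. -/
def fermat : MvPolynomial (Fin 3) ℝ := X 0 ^ 4 + X 1 ^ 4 + X 2 ^ 4

/-- A real line is a bitangent of the Fermat quartic `x⁴ + y⁴ + z⁴`
iff it is `V(x + εy + δz)` with `ε, δ ∈ {±1}`; so there are exactly four real
bitangent lines, each of them non-split (its tangency points form a complex-conjugate
pair of non-real points); for instance the restriction of `f` to `V(x − y − z)` is
`2(y² + yz + z²)²`. -/
lemma cev_fermat (p : Fin 3 → ℂ) : cev fermat p = p 0 ^ 4 + p 1 ^ 4 + p 2 ^ 4 := by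
  simp [cev, cmap, fermat]

lemma lin_expand {R : Type*} [CommSemiring R] (ℓ p : Fin 3 → R) :
    lin ℓ p = ℓ 0 * p 0 + ℓ 1 * p 1 + ℓ 2 * p 2 := by
  simp [lin, Fin.sum_univ_three]

lemma quartic_coeffs (e0 e1 e2 e3 e4 : ℂ)
    (h : ∀ y : ℂ, e4*y^4 + e3*y^3 + e2*y^2 + e1*y + e0 = 0) :
    e0 = 0 ∧ e1 = 0 ∧ e2 = 0 ∧ e3 = 0 ∧ e4 = 0 := by
  have h0 := h 0; have h1 := h 1; have h2 := h (-1); have h3 := h 2; have h4 := h (-2)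
  refine ⟨?_, ?_, ?_, ?_, ?_⟩
  · linear_combination h0
  · linear_combination (2/3 : ℂ)*h1 - (2/3 : ℂ)*h2 - (1/12 : ℂ)*h3 + (1/12 : ℂ)*h4
  · linear_combination (2/3 : ℂ)*h1 + (2/3 : ℂ)*h2 - (1/24 : ℂ)*h3 - (1/24 : ℂ)*h4 - (5/4 : ℂ)*h0
  · linear_combination (1/12 : ℂ)*h3 - (1/12 : ℂ)*h4 - (1/6 : ℂ)*h1 + (1/6 : ℂ)*h2
  · linear_combination (1/24 : ℂ)*h3 + (1/24 : ℂ)*h4 - (1/6 : ℂ)*h1 - (1/6 : ℂ)*h2 + (1/4 : ℂ)*h0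

lemma coeffs_of_sq (C A1 B1 A2 B2 q0 q1 q2 q3 q4 : ℂ)
    (hid : ∀ y z : ℂ, q4*y^4 + q3*y^3*z + q2*y^2*z^2 + q1*y*z^3 + q0*z^4
      = C*((A1*y+B1*z)*(A2*y+B2*z))^2) :
    q4 = C*(A1*A2)^2 ∧ q3 = 2*C*(A1*A2)*(A1*B2+A2*B1) ∧
    q2 = C*((A1*B2+A2*B1)^2 + 2*(A1*A2)*(B1*B2)) ∧
    q1 = 2*C*(B1*B2)*(A1*B2+A2*B1) ∧ q0 = C*(B1*B2)^2 := by
  obtain ⟨h0, h1, h2, h3, h4⟩ := quartic_coeffs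
    (q0 - C*(B1*B2)^2) (q1 - 2*C*(B1*B2)*(A1*B2+A2*B1))
    (q2 - C*((A1*B2+A2*B1)^2 + 2*(A1*A2)*(B1*B2)))
    (q3 - 2*C*(A1*A2)*(A1*B2+A2*B1)) (q4 - C*(A1*A2)^2)
    (fun y => by linear_combination hid y 1)
  exact ⟨by linear_combination h4, by linear_combination h3, by linear_combination h2,
    by linear_combination h1, by linear_combination h0⟩

lemma no_bt (k : ℂ) (hk : k ≠ 0) (C A1 B1 A2 B2 : ℂ) (hC : C ≠ 0)
    (hid : ∀ y z : ℂ, y^4 + k*z^4 = C*((A1*y+B1*z)*(A2*y+B2*z))^2) : False := by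
  obtain ⟨h4, h3, h2, h1, h0⟩ :=
    coeffs_of_sq C A1 B1 A2 B2 k 0 0 0 1 (fun y z => by linear_combination hid y z)
  set u : ℂ := A1*A2; set v : ℂ := B1*B2; set w : ℂ := A1*B2+A2*B1
  have hu : u ≠ 0 := by
    intro h; rw [h] at h4; simp at h4
  have hv : v ≠ 0 := by
    intro h; rw [h] at h0; simp at h0; exact hk h0
  have hw : w = 0 := by
    have := h3.symm
    rcases mul_eq_zero.1 this with h' | h'
    · rcases mul_eq_zero.1 h' with h'' | h''
      · exact absurd h'' (mul_ne_zero two_ne_zero hC)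
      · exact absurd h'' hu
    · exact h'
  rw [hw] at h2
  have : C*(2*(u*v)) = 0 := by linear_combination -h2
  rcases mul_eq_zero.1 this with h' | h'
  · exact hC h'
  · rcases mul_eq_zero.1 h' with h'' | h''
    · norm_num at h''
    · rcases mul_eq_zero.1 h'' with h3' | h3'
      · exact hu h3'
      · exact hv h3'

lemma fwd (b c : ℝ) (C A1 B1 A2 B2 : ℂ) (hC : C ≠ 0)
    (hid : ∀ y z : ℂ, ((b:ℂ)*y + (c:ℂ)*z)^4 + y^4 + z^4
      = C*((A1*y+B1*z)*(A2*y+B2*z))^2) :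
    (b = 1 ∨ b = -1) ∧ (c = 1 ∨ c = -1) := by
  set B : ℂ := (b:ℂ) with hBdef
  set D : ℂ := (c:ℂ) with hDdef
  obtain ⟨h4, h3, h2, h1, h0⟩ :=
    coeffs_of_sq C A1 B1 A2 B2 (D^4+1) (4*B*D^3) (6*B^2*D^2) (4*B^3*D) (B^4+1)
      (fun y z => by linear_combination hid y z)
  set u : ℂ := A1*A2; set v : ℂ := B1*B2; set w : ℂ := A1*B2+A2*B1
  have hb4 : B^4 + 1 ≠ 0 := by
    have h' : (0:ℝ) < b^4 + 1 := by positivity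
    have h'' : ((b^4+1 : ℝ):ℂ) ≠ 0 := by exact_mod_cast h'.ne'
    simpa [hBdef] using h''
  have hd4 : D^4 + 1 ≠ 0 := by
    have h' : (0:ℝ) < c^4 + 1 := by positivity
    have h'' : ((c^4+1 : ℝ):ℂ) ≠ 0 := by exact_mod_cast h'.ne'
    simpa [hDdef] using h''
  have hu : u ≠ 0 := fun h => hb4 (by rw [h4, h]; ring)
  have hv : v ≠ 0 := fun h => hd4 (by rw [h0, h]; ring)
  have hBne : B ≠ 0 := by
    intro h
    have hw : w = 0 := by
      have h' : 2*C*u*w = 0 := by rw [← h3, h]; ring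
      rcases mul_eq_zero.1 h' with h' | h'
      · rcases mul_eq_zero.1 h' with h'' | h''
        · exact absurd h'' (mul_ne_zero two_ne_zero hC)
        · exact absurd h'' hu
      · exact h'
    have h' : C*(2*(u*v)) = 0 := by
      rw [show C*(2*(u*v)) = C*(w^2+2*u*v) - C*w^2 by ring, ← h2, h, hw]; ring
    rcases mul_eq_zero.1 h' with h' | h'
    · exact hC h'
    · rcases mul_eq_zero.1 h' with h'' | h''
      · norm_num at h''
      · rcases mul_eq_zero.1 h'' with h3' | h3'
        · exact hu h3'
        · exact hv h3'
  have hDne : D ≠ 0 := by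
    intro h
    have hw : w = 0 := by
      have h' : 2*C*v*w = 0 := by rw [← h1, h]; ring
      rcases mul_eq_zero.1 h' with h' | h'
      · rcases mul_eq_zero.1 h' with h'' | h''
        · exact absurd h'' (mul_ne_zero two_ne_zero hC)
        · exact absurd h'' hv
      · exact h'
    have h' : C*(2*(u*v)) = 0 := by
      rw [show C*(2*(u*v)) = C*(w^2+2*u*v) - C*w^2 by ring, ← h2, h, hw]; ring
    rcases mul_eq_zero.1 h' with h' | h'
    · exact hC h'
    · rcases mul_eq_zero.1 h' with h'' | h''
      · norm_num at h''
      · rcases mul_eq_zero.1 h'' with h3' | h3'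
        · exact hu h3'
        · exact hv h3'
  -- key : b²v = c²u
  have key : B^2*v = D^2*u := by
    have h' : 4*B*D*(B^2*v - D^2*u) = 0 := by linear_combination v*h3 - u*h1
    rcases mul_eq_zero.1 h' with h' | h'
    · rcases mul_eq_zero.1 h' with h'' | h''
      · rcases mul_eq_zero.1 h'' with h3' | h3'
        · norm_num at h3'
        · exact absurd h3' hBne
      · exact absurd h'' hDne
    · linear_combination h'
  have hsq : C*v^2*B^4 = C*u^2*D^4 := by
    linear_combination C*(D^2*u + B^2*v)*key
  have hc4b4 : D^4 = B^4 := by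
    linear_combination D^4*h4 - B^4*h0 - hsq
  have hc4b4R : c^4 = b^4 := by
    have : ((c^4 : ℝ):ℂ) = ((b^4 : ℝ):ℂ) := by push_cast; exact hc4b4
    exact_mod_cast this
  have hbR : b ≠ 0 := fun h => hBne (by rw [hBdef, h]; simp)
  have hc2b2 : c^2 = b^2 := by nlinarith [sq_nonneg c, sq_nonneg b, sq_nonneg (c^2 + b^2)]
  have hD2 : D^2 = B^2 := by
    have : ((c^2 : ℝ):ℂ) = ((b^2 : ℝ):ℂ) := by exact_mod_cast hc2b2
    push_cast at this; exact this
  have hv2 : v = u := by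
    have h' : B^2*(v - u) = 0 := by linear_combination key + u*hD2
    rcases mul_eq_zero.1 h' with h' | h'
    · exact absurd (pow_eq_zero_iff (by norm_num)|>.1 h') hBne
    · linear_combination h'
  have k1 : C^2*u^2*w^2 = 4*B^6*D^2 := by
    linear_combination -(B^3*D + (1/2)*C*u*w)*h3
  have Cw2val : C*w^2 = 4*B^4 - 2 := by
    linear_combination -h2 + 6*B^2*hD2 - 2*C*u*hv2 + 2*h4
  have squareeq : C^2*u^2*w^2 = 4*B^8 := by
    linear_combination k1 + 4*B^6*hD2
  have hB4 : B^4 = 1 := by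
    linear_combination (1/2)*((C*w^2)*h4 + squareeq - (B^4+1)*Cw2val)
  have hb4R : b^4 = 1 := by
    have : ((b^4 : ℝ):ℂ) = ((1:ℝ):ℂ) := by push_cast; exact hB4
    exact_mod_cast this
  have hb2 : b^2 = 1 := by nlinarith [sq_nonneg b]
  have hc2 : c^2 = 1 := by rw [hc2b2]; exact hb2
  constructor
  · rcases mul_eq_zero.1 (show (b-1)*(b+1) = 0 by nlinarith) with h | h
    · exact Or.inl (by linarith)
    · exact Or.inr (by linarith)
  · rcases mul_eq_zero.1 (show (c-1)*(c+1) = 0 by nlinarith) with h | h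
    · exact Or.inl (by linarith)
    · exact Or.inr (by linarith)

lemma quad_id (ε δ : ℝ) (hε : ε = 1 ∨ ε = -1) (hδ : δ = 1 ∨ δ = -1) (a b : ℂ) :
    ((ε:ℂ)*a + (δ:ℂ)*b)^4 + a^4 + b^4
      = 2*(a^2 + (ε:ℂ)*(δ:ℂ)*a*b + b^2)^2 := by
  have hεc : ((ε:ℂ))^2 = 1 := by rcases hε with h | h <;> rw [h] <;> norm_num
  have hδc : ((δ:ℂ))^2 = 1 := by rcases hδ with h | h <;> rw [h] <;> norm_num
  linear_combination (a^4*((ε:ℂ)^2+1) + 4*(ε:ℂ)*(δ:ℂ)*a^3*b + 4*(δ:ℂ)^2*a^2*b^2)*hεc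
    + (4*a^2*b^2 + 4*(ε:ℂ)*(δ:ℂ)*a*b^3 + b^4*((δ:ℂ)^2+1))*hδc

lemma part1 (ℓ : Fin 3 → ℝ) (hl : ℓ ≠ 0) :
    IsBitangent fermat (cvec ℓ) ↔
      ∃ t ε δ : ℝ, t ≠ 0 ∧ (ε = 1 ∨ ε = -1) ∧ (δ = 1 ∨ δ = -1) ∧
        ℓ = t • ![(1 : ℝ), ε, δ] := by
  constructor
  · rintro ⟨z₁, z₂, -, -, -, -, -, m₁, m₂, C, hC, -, -, -, -, hres⟩
    by_cases h0 : ℓ 0 = 0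
    · exfalso
      have hl12 : ¬ (ℓ 1 = 0 ∧ ℓ 2 = 0) := by
        rintro ⟨h1, h2⟩
        exact hl (funext fun i => by fin_cases i <;> assumption)
      have hkpos : (0:ℝ) < (ℓ 1)^4 + (ℓ 2)^4 := by
        rcases not_and_or.1 hl12 with h | h
        · have : (0:ℝ) < (ℓ 1)^4 := by positivity
          nlinarith [pow_le_pow_left₀ (le_refl (0:ℝ)) (le_refl (0:ℝ)) 4, sq_nonneg ((ℓ 2)^2)]
        · have : (0:ℝ) < (ℓ 2)^4 := by positivity
          nlinarith [sq_nonneg ((ℓ 1)^2)]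
      refine no_bt ((( (ℓ 1)^4 + (ℓ 2)^4 : ℝ)):ℂ) (by exact_mod_cast hkpos.ne') C
        (m₁ 0) ((ℓ 2 : ℂ)*m₁ 1 - (ℓ 1 : ℂ)*m₁ 2)
        (m₂ 0) ((ℓ 2 : ℂ)*m₂ 1 - (ℓ 1 : ℂ)*m₂ 2) hC (fun y z => ?_)
      have hon : lin (cvec ℓ) ![y, (ℓ 2 : ℂ)*z, -((ℓ 1 : ℂ)*z)] = 0 := by
        rw [lin_expand]; simp [cvec, h0]; ring
      have := hres _ hon
      rw [cev_fermat] at this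
      rw [lin_expand, lin_expand] at this
      simp only [Matrix.cons_val_zero, Matrix.cons_val_one, Matrix.head_cons,
        Matrix.cons_val_two, Matrix.tail_cons] at this
      push_cast
      push_cast at this
      linear_combination this
    · -- scale
      set b : ℝ := ℓ 1 / ℓ 0 with hbdef
      set c : ℝ := ℓ 2 / ℓ 0 with hcdef
      have hb : ℓ 0 * b = ℓ 1 := by rw [hbdef]; field_simp
      have hc : ℓ 0 * c = ℓ 2 := by rw [hcdef]; field_simp
      have hbC : (ℓ 0 : ℂ) * (b:ℂ) = (ℓ 1 : ℂ) := by exact_mod_cast congrArg (fun x : ℝ => (x:ℂ)) hb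
      have hcC : (ℓ 0 : ℂ) * (c:ℂ) = (ℓ 2 : ℂ) := by exact_mod_cast congrArg (fun x : ℝ => (x:ℂ)) hc
      obtain ⟨hb1, hc1⟩ := fwd b c C
        (m₁ 1 - (b:ℂ)*m₁ 0) (m₁ 2 - (c:ℂ)*m₁ 0)
        (m₂ 1 - (b:ℂ)*m₂ 0) (m₂ 2 - (c:ℂ)*m₂ 0) hC (fun y z => by
          have hon : lin (cvec ℓ) ![-((b:ℂ)*y + (c:ℂ)*z), y, z] = 0 := by
            rw [lin_expand]
            simp only [Matrix.cons_val_zero, Matrix.cons_val_one, Matrix.head_cons,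
              Matrix.cons_val_two, Matrix.tail_cons, cvec]
            linear_combination -y*hbC - z*hcC
          have := hres _ hon
          rw [cev_fermat] at this
          rw [lin_expand, lin_expand] at this
          simp only [Matrix.cons_val_zero, Matrix.cons_val_one, Matrix.head_cons,
            Matrix.cons_val_two, Matrix.tail_cons] at this
          linear_combination this)
      refine ⟨ℓ 0, b, c, h0, hb1, hc1, funext fun i => ?_⟩
      fin_cases i
      · simp
      · simpa using hb.symm
      · simpa using hc.symm
  · rintro ⟨t, ε, δ, ht, hε, hδ, rfl⟩
    set e : ℝ := ε * δ with hedef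
    have he2 : ((ε:ℂ))*((δ:ℂ)) = (e:ℂ) := by push_cast [hedef]; ring
    have hs3 : ((Real.sqrt 3 : ℝ):ℂ)^2 = 3 := by
      rw [← Complex.ofReal_pow]
      norm_cast
      rw [Real.sq_sqrt]; norm_num
    set s : ℂ := ((Real.sqrt 3 : ℝ):ℂ) with hs
    have hsne : s ≠ 0 := by
      intro h; rw [h] at hs3; norm_num at hs3
    set ω : ℂ := (-(e:ℂ) + Complex.I*s)/2 with hω
    set ω' : ℂ := (-(e:ℂ) - Complex.I*s)/2 with hω'
    have hec : ((e:ℂ))^2 = 1 := by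
      have : e = 1 ∨ e = -1 := by
        rcases hε with h | h <;> rcases hδ with h' | h' <;> rw [hedef, h, h'] <;> norm_num
      rcases this with h | h <;> rw [h] <;> norm_num
    have hsum : ω + ω' = -((ε:ℂ)*(δ:ℂ)) := by rw [hω, hω', he2]; ring
    have hprod : ω * ω' = 1 := by
      have h' : ω * ω' = (((e:ℂ))^2 - Complex.I^2*s^2)/4 := by rw [hω, hω']; ring
      rw [h', hec, Complex.I_sq, hs3]; norm_num
    have hdiff : ω - ω' = Complex.I * s := by rw [hω, hω']; ring
    have hωne : ω ≠ ω' := by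
      intro h
      have h2 : Complex.I * s = 0 := by rw [← hdiff, h, sub_self]
      rcases mul_eq_zero.1 h2 with h' | h'
      · exact Complex.I_ne_zero h'
      · exact hsne h'
    -- quadratic factorization
    have hq : ∀ a b : ℂ, (a - ω*b)*(a - ω'*b) = a^2 + (ε:ℂ)*(δ:ℂ)*a*b + b^2 := by
      intro a b
      linear_combination b^2*hprod - a*b*hsum
    set L : Fin 3 → ℂ := cvec (t • ![(1:ℝ), ε, δ]) with hL
    have hLi : ∀ i, L i = (t:ℂ) * (![(1:ℝ), ε, δ] i : ℝ) := by
      intro i; rw [hL]; simp [cvec]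
    have hL0 : L 0 = (t:ℂ) := by rw [hLi]; simp
    have hL1 : L 1 = (t:ℂ)*(ε:ℂ) := by rw [hLi]; simp
    have hL2 : L 2 = (t:ℂ)*(δ:ℂ) := by rw [hLi]; simp
    have htC : (t:ℂ) ≠ 0 := by exact_mod_cast ht
    -- on-line criterion
    have honline : ∀ p : Fin 3 → ℂ, lin L p = 0 ↔ p 0 = -((ε:ℂ)*p 1 + (δ:ℂ)*p 2) := by
      intro p
      rw [lin_expand, hL0, hL1, hL2]
      constructor
      · intro h
        have := mul_eq_zero.1 (show (t:ℂ)*(p 0 + ((ε:ℂ)*p 1 + (δ:ℂ)*p 2)) = 0 by linear_combination h)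
        rcases this with h' | h'
        · exact absurd h' htC
        · linear_combination h'
      · intro h; rw [h]; ring
    set z₁ : Fin 3 → ℂ := ![-((ε:ℂ)*ω + (δ:ℂ)), ω, 1] with hz₁
    set z₂ : Fin 3 → ℂ := ![-((ε:ℂ)*ω' + (δ:ℂ)), ω', 1] with hz₂
    set m₁ : Fin 3 → ℂ := ![0, 1, -ω] with hm₁
    set m₂ : Fin 3 → ℂ := ![0, 1, -ω'] with hm₂
    have hz₁on : lin L z₁ = 0 := by
      apply (honline z₁).2
      rw [hz₁]; simp
    have hz₂on : lin L z₂ = 0 := by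
      apply (honline z₂).2
      rw [hz₂]; simp
    have hm₁p : ∀ p : Fin 3 → ℂ, lin m₁ p = p 1 - ω * p 2 := by
      intro p; rw [lin_expand, hm₁]; simp; ring
    have hm₂p : ∀ p : Fin 3 → ℂ, lin m₂ p = p 1 - ω' * p 2 := by
      intro p; rw [lin_expand, hm₂]; simp; ring
    refine ⟨z₁, z₂, ?_, ?_, ?_, hz₁on, hz₂on, m₁, m₂, 2, two_ne_zero, ?_, ?_, ⟨z₂, hz₂on, ?_⟩,
      ⟨z₁, hz₁on, ?_⟩, ?_⟩
    · intro h
      have := congrFun h 0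
      rw [hL0] at this; simp at this; exact ht this
    · intro h
      have := congrFun h 2
      rw [hz₁] at this; simp at this
    · intro h
      have := congrFun h 2
      rw [hz₂] at this; simp at this
    · rw [hm₁p, hz₁]; simp
    · rw [hm₂p, hz₂]; simp
    · rw [hm₁p, hz₂]; simp
      intro h
      exact hωne (show ω = ω' by linear_combination -h)
    · rw [hm₂p, hz₁]; simp
      intro h
      exact hωne (show ω = ω' by linear_combination h)
    · intro p hp
      have hp0 := (honline p).1 hp
      rw [cev_fermat, hp0, hm₁p, hm₂p, hq]
      linear_combination quad_id ε δ hε hδ (p 1) (p 2)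

lemma noRealRoot (e : ℝ) (he : e = 1 ∨ e = -1) (x : ℂ)
    (hx : x^2 + (e:ℂ)*x + 1 = 0) : (starRingEnd ℂ) x ≠ x := by
  intro hcx
  obtain ⟨r, rfl⟩ := Complex.conj_eq_iff_real.1 hcx
  have : ((r^2 + e*r + 1 : ℝ) : ℂ) = 0 := by push_cast; linear_combination hx
  have hr : r^2 + e*r + 1 = 0 := by exact_mod_cast this
  rcases he with h | h <;> nlinarith [sq_nonneg (r + 1/2), sq_nonneg (r - 1/2)]

lemma part3 (ℓ : Fin 3 → ℝ) (hl : ℓ ≠ 0) (z₁ z₂ : Fin 3 → ℂ)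
    (h : IsBitangentAt fermat (cvec ℓ) z₁ z₂) :
    ¬ IsRealPoint z₁ ∧ ¬ IsRealPoint z₂ ∧
      ∃ t : ℂ, t ≠ 0 ∧ (fun i => (starRingEnd ℂ) (z₁ i)) = t • z₂ := by
  obtain ⟨t, ε, δ, ht, hε, hδ, hLeq⟩ := (part1 ℓ hl).1 ⟨z₁, z₂, h⟩
  obtain ⟨-, hz1ne, hz2ne, hlz1, hlz2, m₁, m₂, C, hC, hm1, hm2, hp1, hp2, hres⟩ := h
  have htC : (t:ℂ) ≠ 0 := by exact_mod_cast ht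
  set E1 : ℂ := (ε:ℂ) with hE1
  set E2 : ℂ := (δ:ℂ) with hE2
  have hLi : ∀ i, (cvec ℓ) i = (t:ℂ) * ((![(1:ℝ), ε, δ] i : ℝ):ℂ) := by
    intro i; rw [hLeq]; simp [cvec]
  have honline : ∀ p : Fin 3 → ℂ, lin (cvec ℓ) p = 0 → p 0 = -(E1*p 1 + E2*p 2) := by
    intro p hp
    rw [lin_expand, hLi 0, hLi 1, hLi 2] at hp
    simp only [Matrix.cons_val_zero, Matrix.cons_val_one, Matrix.head_cons,
      Matrix.cons_val_two, Matrix.tail_cons] at hp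
    push_cast at hp
    have h' := mul_eq_zero.1 (show (t:ℂ)*(p 0 + (E1*p 1 + E2*p 2)) = 0 by
      rw [hE1, hE2]; linear_combination hp)
    rcases h' with h' | h'
    · exact absurd h' htC
    · linear_combination h'
  -- quadratic vanishing at tangency points
  have hquad : ∀ (z : Fin 3 → ℂ), lin (cvec ℓ) z = 0 → cev fermat z = 0 →
      z 1 ^ 2 + E1*E2*(z 1)*(z 2) + z 2 ^ 2 = 0 := by
    intro z hzon hzev
    have h0 := honline z hzon
    rw [cev_fermat, h0] at hzev
    have hq := quad_id ε δ hε hδ (z 1) (z 2)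
    have h2 : 2*(z 1^2 + E1*E2*(z 1)*(z 2) + z 2^2)^2 = 0 := by
      rw [hE1, hE2, ← hq]; linear_combination hzev
    have h3 : (z 1^2 + E1*E2*(z 1)*(z 2) + z 2^2)^2 = 0 := by
      rcases mul_eq_zero.1 h2 with h' | h'
      · norm_num at h'
      · exact h'
    exact pow_eq_zero_iff (n := 2) (by norm_num) |>.1 h3
  have hev1 : cev fermat z₁ = 0 := by
    rw [hres z₁ hlz1, hm1]; ring
  have hev2 : cev fermat z₂ = 0 := by
    rw [hres z₂ hlz2, hm2]; ring
  have hq1 := hquad z₁ hlz1 hev1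
  have hq2 := hquad z₂ hlz2 hev2
  have h10 := honline z₁ hlz1
  have h20 := honline z₂ hlz2
  -- z i 2 ≠ 0
  have hb : ∀ z : Fin 3 → ℂ, z ≠ 0 → z 0 = -(E1*z 1 + E2*z 2) →
      z 1 ^ 2 + E1*E2*(z 1)*(z 2) + z 2 ^ 2 = 0 → z 2 ≠ 0 := by
    intro z hzne hz0 hzq h2
    rw [h2] at hzq hz0
    have h1 : z 1 = 0 := by
      have : z 1 ^ 2 = 0 := by linear_combination hzq
      exact pow_eq_zero_iff (n := 2) (by norm_num) |>.1 this
    rw [h1] at hz0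
    norm_num at hz0
    apply hzne
    funext i
    fin_cases i
    · simpa using hz0
    · simpa using h1
    · simpa using h2
  have hb1 := hb z₁ hz1ne h10 hq1
  have hb2 := hb z₂ hz2ne h20 hq2
  set e : ℝ := ε * δ with hedef
  have heor : e = 1 ∨ e = -1 := by
    rcases hε with h' | h' <;> rcases hδ with h'' | h'' <;> rw [hedef, h', h''] <;> norm_num
  have hE : E1*E2 = ((e:ℝ):ℂ) := by rw [hE1, hE2, hedef]; push_cast; ring
  -- ratios are roots
  set r1 : ℂ := z₁ 1 / z₁ 2 with hr1
  set r2 : ℂ := z₂ 1 / z₂ 2 with hr2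
  have hc1 : r1 * z₁ 2 = z₁ 1 := div_mul_cancel₀ _ hb1
  have hc2 : r2 * z₂ 2 = z₂ 1 := div_mul_cancel₀ _ hb2
  have hroot1 : r1^2 + (e:ℂ)*r1 + 1 = 0 := by
    have h' : (z₁ 2)^2 * (r1^2 + (e:ℂ)*r1 + 1) = 0 := by
      linear_combination hq1 - (z₁ 1)*(z₁ 2)*hE + (r1*z₁ 2 + z₁ 1 + (e:ℂ)*z₁ 2)*hc1
    rcases mul_eq_zero.1 h' with h' | h'
    · exact absurd h' (pow_ne_zero 2 hb1)
    · exact h'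
  have hroot2 : r2^2 + (e:ℂ)*r2 + 1 = 0 := by
    have h' : (z₂ 2)^2 * (r2^2 + (e:ℂ)*r2 + 1) = 0 := by
      linear_combination hq2 - (z₂ 1)*(z₂ 2)*hE + (r2*z₂ 2 + z₂ 1 + (e:ℂ)*z₂ 2)*hc2
    rcases mul_eq_zero.1 h' with h' | h'
    · exact absurd h' (pow_ne_zero 2 hb2)
    · exact h'
  have ha1 : z₁ 1 = r1 * z₁ 2 := hc1.symm
  have ha2 : z₂ 1 = r2 * z₂ 2 := hc2.symm
  -- non-reality
  have hnr : ∀ z : Fin 3 → ℂ, z 2 ≠ 0 → z 0 = -(E1*z 1 + E2*z 2) →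
      (z 1 / z 2)^2 + (e:ℂ)*(z 1 / z 2) + 1 = 0 → ¬ IsRealPoint z := by
    rintro z hz2 hz0 hroot ⟨w, tc, hw, htc, hzw⟩
    have hz1e : z 1 = tc * (w 1 : ℂ) := by rw [hzw]; simp [cvec]
    have hz2e : z 2 = tc * (w 2 : ℂ) := by rw [hzw]; simp [cvec]
    have hrat : z 1 / z 2 = ((w 1 / w 2 : ℝ) : ℂ) := by
      rw [hz1e, hz2e, mul_div_mul_left _ _ htc, Complex.ofReal_div]
    apply noRealRoot e heor (z 1 / z 2) hroot
    rw [hrat, Complex.conj_ofReal]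
  refine ⟨hnr z₁ hb1 h10 hroot1, hnr z₂ hb2 h20 hroot2, ?_⟩
  -- distinctness of the two tangency ratios
  have hrne : r1 ≠ r2 := by
    intro hrr
    -- both m-forms vanish at ratio r1; evaluate at other root
    set A1 : ℂ := m₁ 1 - E1 * m₁ 0 with hA1
    set B1 : ℂ := m₁ 2 - E2 * m₁ 0 with hB1
    set A2 : ℂ := m₂ 1 - E1 * m₂ 0 with hA2
    set B2 : ℂ := m₂ 2 - E2 * m₂ 0 with hB2
    have hlinm : ∀ (m : Fin 3 → ℂ) (p : Fin 3 → ℂ), p 0 = -(E1*p 1 + E2*p 2) →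
        lin m p = (m 1 - E1*m 0) * p 1 + (m 2 - E2*m 0) * p 2 := by
      intro m p hp0
      rw [lin_expand, hp0]; ring
    have hv1 : A1 * r1 + B1 = 0 := by
      have := hm1
      rw [hlinm m₁ z₁ h10, ha1] at this
      have h' : (A1 * r1 + B1) * z₁ 2 = 0 := by rw [hA1, hB1]; linear_combination this
      rcases mul_eq_zero.1 h' with h' | h'
      · exact h'
      · exact absurd h' hb1
    have hv2 : A2 * r1 + B2 = 0 := by
      have := hm2
      rw [hlinm m₂ z₂ h20, ha2, ← hrr] at this
      have h' : (A2 * r1 + B2) * z₂ 2 = 0 := by rw [hA2, hB2]; linear_combination this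
      rcases mul_eq_zero.1 h' with h' | h'
      · exact h'
      · exact absurd h' hb2
    -- the other root
    set s : ℂ := -(e:ℂ) - r1 with hsdef
    have hsroot : s^2 + (e:ℂ)*s + 1 = 0 := by
      rw [hsdef]; linear_combination hroot1
    have hsne : s ≠ r1 := by
      intro h'
      have h2 : 2*r1 = -(e:ℂ) := by rw [hsdef] at h'; linear_combination -h'
      have hec : ((e:ℂ))^2 = 1 := by
        rcases heor with h'' | h'' <;> rw [h''] <;> norm_num
      have : (3:ℂ) = 0 := by
        linear_combination 4*hroot1 - (2*r1 - (e:ℂ))*h2 - 2*(e:ℂ)*h2 + hec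
      norm_num at this
    -- evaluate restriction identity at the other root
    set p₁ : Fin 3 → ℂ := ![-(E1*s + E2), s, 1] with hp₁
    have hp₁on : lin (cvec ℓ) p₁ = 0 := by
      rw [lin_expand, hLi 0, hLi 1, hLi 2]
      simp only [hp₁, Matrix.cons_val_zero, Matrix.cons_val_one, Matrix.head_cons,
        Matrix.cons_val_two, Matrix.tail_cons]
      rw [hE1, hE2]; push_cast; ring
    have hres1 := hres p₁ hp₁on
    have hlhs : cev fermat p₁ = 0 := by
      rw [cev_fermat]
      simp only [hp₁, Matrix.cons_val_zero, Matrix.cons_val_one, Matrix.head_cons,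
        Matrix.cons_val_two, Matrix.tail_cons]
      have hq := quad_id ε δ hε hδ s 1
      rw [hE1, hE2]
      linear_combination hq + (2*(s^2+(e:ℂ)*s+1) + 4*((ε:ℂ)*(δ:ℂ) - (e:ℂ))*s)*hsroot
        + (2*((ε:ℂ)*(δ:ℂ) - (e:ℂ))*s^2)*hE
    rw [hlhs] at hres1
    have hprod0 : lin m₁ p₁ * lin m₂ p₁ = 0 := by
      have h' : (lin m₁ p₁ * lin m₂ p₁)^2 = 0 := by
        rcases mul_eq_zero.1 hres1.symm with h' | h'
        · exact absurd h' hC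
        · exact h'
      exact pow_eq_zero_iff (n := 2) (by norm_num) |>.1 h'
    have hp₁0 : p₁ 0 = -(E1 * p₁ 1 + E2 * p₁ 2) := by
      simp only [hp₁, Matrix.cons_val_zero, Matrix.cons_val_one, Matrix.head_cons,
        Matrix.cons_val_two, Matrix.tail_cons]
      ring
    rw [hlinm m₁ p₁ hp₁0, hlinm m₂ p₁ hp₁0] at hprod0
    simp only [hp₁, Matrix.cons_val_one, Matrix.head_cons, Matrix.cons_val_two,
      Matrix.tail_cons, mul_one, Matrix.cons_val_zero] at hprod0
    -- each factor zero gives degeneracy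
    rcases mul_eq_zero.1 hprod0 with h' | h'
    · -- m₁ degenerate
      have hA10 : A1 = 0 := by
        have h'' : A1 * (s - r1) = 0 := by rw [hA1]; linear_combination h' - hv1
        rcases mul_eq_zero.1 h'' with h'' | h''
        · exact h''
        · exact absurd (by linear_combination h'' : s = r1) hsne
      have hB10 : B1 = 0 := by rw [hA10] at hv1; linear_combination hv1
      obtain ⟨p, hpon, hpne⟩ := hp1
      apply hpne
      rw [hlinm m₁ p (honline p hpon), ← hA1, ← hB1, hA10, hB10]; ring
    · have hA20 : A2 = 0 := by
        have h'' : A2 * (s - r1) = 0 := by rw [hA2]; linear_combination h' - hv2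
        rcases mul_eq_zero.1 h'' with h'' | h''
        · exact h''
        · exact absurd (by linear_combination h'' : s = r1) hsne
      have hB20 : B2 = 0 := by rw [hA20] at hv2; linear_combination hv2
      obtain ⟨p, hpon, hpne⟩ := hp2
      apply hpne
      rw [hlinm m₂ p (honline p hpon), ← hA2, ← hB2, hA20, hB20]; ring
  -- conjugate of r1 is r2
  have hconj1 : ((starRingEnd ℂ) r1)^2 + (e:ℂ)*((starRingEnd ℂ) r1) + 1 = 0 := by
    have := congrArg (starRingEnd ℂ) hroot1
    simpa [map_add, map_mul, map_pow, Complex.conj_ofReal] using this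
  have hcr1ne : (starRingEnd ℂ) r1 ≠ r1 := noRealRoot e heor r1 hroot1
  have hcr1 : (starRingEnd ℂ) r1 = r2 := by
    -- two roots of the quadratic: conj r1 and r2 both ≠ r1, both roots ⇒ equal
    have hsum : ∀ x : ℂ, x^2 + (e:ℂ)*x + 1 = 0 → x ≠ r1 → x = -(e:ℂ) - r1 := by
      intro x hx hxne
      have h' : (x - r1) * (x + r1 + (e:ℂ)) = 0 := by linear_combination hx - hroot1
      rcases mul_eq_zero.1 h' with h' | h'
      · exact absurd (by linear_combination h' : x = r1) hxne
      · linear_combination h'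
    rw [hsum _ hconj1 hcr1ne, hsum r2 hroot2 (Ne.symm hrne)]
  -- build the scalar
  refine ⟨(starRingEnd ℂ) (z₁ 2) / z₂ 2, ?_, ?_⟩
  · apply div_ne_zero _ hb2
    simpa using hb1
  · funext i
    have hi2 : (starRingEnd ℂ) (z₁ 2) = ((starRingEnd ℂ) (z₁ 2) / z₂ 2) * z₂ 2 := by
      field_simp
    have hi1 : (starRingEnd ℂ) (z₁ 1) = ((starRingEnd ℂ) (z₁ 2) / z₂ 2) * z₂ 1 := by
      rw [ha1, map_mul, hcr1, ha2]
      field_simp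
    have hc0 : (starRingEnd ℂ) (z₁ 0)
        = -(E1 * (starRingEnd ℂ) (z₁ 1) + E2 * (starRingEnd ℂ) (z₁ 2)) := by
      rw [h10, hE1, hE2]
      simp [map_add, map_mul, map_neg, Complex.conj_ofReal]
    fin_cases i
    · show (starRingEnd ℂ) (z₁ 0) = ((starRingEnd ℂ) (z₁ 2) / z₂ 2) * z₂ 0
      linear_combination hc0 - ((starRingEnd ℂ) (z₁ 2) / z₂ 2)*h20 - E1*hi1 - E2*hi2
    · exact hi1
    · exact hi2

lemma hv3 (ε δ : ℝ) : (![1, ε, δ] : Fin 3 → ℝ) ≠ 0 := by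
  intro h
  have := congrFun h 0
  norm_num at this

lemma rep_iff (L : Projectivization ℝ (Fin 3 → ℝ)) (ε δ : ℝ) :
    (∃ t : ℝ, t ≠ 0 ∧ L.rep = t • ![1, ε, δ]) ↔
      L = Projectivization.mk ℝ ![1, ε, δ] (hv3 ε δ) := by
  constructor
  · rintro ⟨t, ht, hrep⟩
    conv_lhs => rw [← Projectivization.mk_rep L]
    rw [Projectivization.mk_eq_mk_iff]
    exact ⟨Units.mk0 t ht, by rw [Units.smul_def, Units.val_mk0, ← hrep]⟩
  · intro hL
    have h' : Projectivization.mk ℝ L.rep (Projectivization.rep_nonzero L)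
        = Projectivization.mk ℝ ![1, ε, δ] (hv3 ε δ) := by
      rw [Projectivization.mk_rep]; exact hL
    obtain ⟨a, ha⟩ := (Projectivization.mk_eq_mk_iff _ _ _ _ _).1 h'
    exact ⟨(a : ℝ), a.ne_zero, by rw [← ha, Units.smul_def]⟩

lemma mk_inj (ε δ ε' δ' : ℝ)
    (h : Projectivization.mk ℝ ![1, ε, δ] (hv3 ε δ)
       = Projectivization.mk ℝ ![1, ε', δ'] (hv3 ε' δ')) : ε = ε' ∧ δ = δ' := by
  rw [Projectivization.mk_eq_mk_iff] at h
  obtain ⟨a, ha⟩ := h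
  have h0 := congrFun ha 0
  have h1 := congrFun ha 1
  have h2 := congrFun ha 2
  simp [Units.smul_def, Pi.smul_apply, smul_eq_mul] at h0 h1 h2
  rw [h0] at h1 h2
  simp at h1 h2
  exact ⟨h1.symm, h2.symm⟩

lemma part2 : (realBitangents fermat).ncard = 4 := by
  have hset : realBitangents fermat =
      {Projectivization.mk ℝ ![1, 1, 1] (hv3 1 1),
       Projectivization.mk ℝ ![1, 1, -1] (hv3 1 (-1)),
       Projectivization.mk ℝ ![1, -1, 1] (hv3 (-1) 1),
       Projectivization.mk ℝ ![1, -1, -1] (hv3 (-1) (-1))} := by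
    ext L
    simp only [realBitangents, Set.mem_setOf_eq, Set.mem_insert_iff, Set.mem_singleton_iff]
    rw [part1 L.rep (Projectivization.rep_nonzero L)]
    constructor
    · rintro ⟨t, ε, δ, ht, hε, hδ, hrep⟩
      have hL := (rep_iff L ε δ).1 ⟨t, ht, hrep⟩
      rcases hε with rfl | rfl <;> rcases hδ with rfl | rfl <;> simp [hL]
    · intro hL
      rcases hL with hL | hL | hL | hL
      · obtain ⟨t, ht, hrep⟩ := (rep_iff L 1 1).2 hL
        exact ⟨t, 1, 1, ht, Or.inl rfl, Or.inl rfl, hrep⟩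
      · obtain ⟨t, ht, hrep⟩ := (rep_iff L 1 (-1)).2 hL
        exact ⟨t, 1, -1, ht, Or.inl rfl, Or.inr rfl, hrep⟩
      · obtain ⟨t, ht, hrep⟩ := (rep_iff L (-1) 1).2 hL
        exact ⟨t, -1, 1, ht, Or.inr rfl, Or.inl rfl, hrep⟩
      · obtain ⟨t, ht, hrep⟩ := (rep_iff L (-1) (-1)).2 hL
        exact ⟨t, -1, -1, ht, Or.inr rfl, Or.inr rfl, hrep⟩
  rw [hset]
  have d12 : Projectivization.mk ℝ ![1, 1, 1] (hv3 1 1)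
      ≠ Projectivization.mk ℝ ![1, 1, -1] (hv3 1 (-1)) := by
    intro h; have := (mk_inj _ _ _ _ h).2; norm_num at this
  have d13 : Projectivization.mk ℝ ![1, 1, 1] (hv3 1 1)
      ≠ Projectivization.mk ℝ ![1, -1, 1] (hv3 (-1) 1) := by
    intro h; have := (mk_inj _ _ _ _ h).1; norm_num at this
  have d14 : Projectivization.mk ℝ ![1, 1, 1] (hv3 1 1)
      ≠ Projectivization.mk ℝ ![1, -1, -1] (hv3 (-1) (-1)) := by
    intro h; have := (mk_inj _ _ _ _ h).1; norm_num at this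
  have d23 : Projectivization.mk ℝ ![1, 1, -1] (hv3 1 (-1))
      ≠ Projectivization.mk ℝ ![1, -1, 1] (hv3 (-1) 1) := by
    intro h; have := (mk_inj _ _ _ _ h).1; norm_num at this
  have d24 : Projectivization.mk ℝ ![1, 1, -1] (hv3 1 (-1))
      ≠ Projectivization.mk ℝ ![1, -1, -1] (hv3 (-1) (-1)) := by
    intro h; have := (mk_inj _ _ _ _ h).1; norm_num at this
  have d34 : Projectivization.mk ℝ ![1, -1, 1] (hv3 (-1) 1)
      ≠ Projectivization.mk ℝ ![1, -1, -1] (hv3 (-1) (-1)) := by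
    intro h; have := (mk_inj _ _ _ _ h).2; norm_num at this
  rw [Set.ncard_insert_of_notMem (by simp [d12, d13, d14])
      (((Set.finite_singleton _).insert _).insert _),
    Set.ncard_insert_of_notMem (by simp [d23, d24])
      ((Set.finite_singleton _).insert _),
    Set.ncard_pair d34]

lemma part4 (y z : ℂ) : cev fermat ![y + z, y, z] = 2 * (y ^ 2 + y * z + z ^ 2) ^ 2 := by
  rw [cev_fermat]
  simp only [Matrix.cons_val_zero, Matrix.cons_val_one, Matrix.head_cons,
    Matrix.cons_val_two, Matrix.tail_cons]
  ring

theorem statement7 :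
    (∀ ℓ : Fin 3 → ℝ, ℓ ≠ 0 →
      (IsBitangent fermat (cvec ℓ) ↔
        ∃ t ε δ : ℝ, t ≠ 0 ∧ (ε = 1 ∨ ε = -1) ∧ (δ = 1 ∨ δ = -1) ∧
          ℓ = t • ![(1 : ℝ), ε, δ])) ∧
    (realBitangents fermat).ncard = 4 ∧
    (∀ ℓ : Fin 3 → ℝ, ℓ ≠ 0 → ∀ z₁ z₂ : Fin 3 → ℂ,
      IsBitangentAt fermat (cvec ℓ) z₁ z₂ →
        ¬ IsRealPoint z₁ ∧ ¬ IsRealPoint z₂ ∧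
        ∃ t : ℂ, t ≠ 0 ∧ (fun i => (starRingEnd ℂ) (z₁ i)) = t • z₂) ∧
    (∀ y z : ℂ, cev fermat ![y + z, y, z] = 2 * (y ^ 2 + y * z + z ^ 2) ^ 2) := by
  exact ⟨fun ℓ hl => part1 ℓ hl, part2, fun ℓ hl z₁ z₂ h => part3 ℓ hl z₁ z₂ h, part4⟩

end
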